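/- (Expander mixing in ℓ_∞→ℓ_1 norm) Let G be the adjacency matrix of a d-regular graph on n vertices and let λ(d) be the second largest eigenvalue of G in absolute value. Then (1/n²) ‖(n/d) G - 𝟏^{(n)}‖_{∞→1} ≤ 4 λ(d)/d, where 𝟏^{(n)} is the all-ones matrix and ‖M‖_{∞→1} = sup_{s,t∈{-1,1}ⁿ} ∑_{ij} M_{ij} s_i t_j. -/

import Mathlib

/-- The ℓ_∞→ℓ_1 norm of a matrix: sup over ±1 sign vectors s, t of ∑ᵢⱼ Aᵢⱼ sᵢ tⱼ. -/
noncomputable def linftyToL1Norm {n : ℕ} (A : Matrix (Fin n) (Fin n) ℝ) : ℝ :=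
  sSup {x : ℝ | ∃ s t : Fin n → ℝ, (∀ i, s i = 1 ∨ s i = -1) ∧
    (∀ j, t j = 1 ∨ t j = -1) ∧ x = ∑ i, ∑ j, A i j * s i * t j}

/-- Expander mixing lemma in ℓ_∞→ℓ_1 norm: if G is a d-regular graph on n vertices whose
second largest eigenvalue in absolute value is λ (expressed as the spectral bound on the
orthogonal complement of the all-ones vector), then (1/n²)‖(n/d)G - 𝟏‖_{∞→1} ≤ 4λ/d. -/
theorem expander_mixing (n : ℕ) (hn : 0 < n) (d : ℝ) (hd : 0 < d)
    (G : Matrix (Fin n) (Fin n) ℝ) (hsym : G.IsSymm)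
    (h01 : ∀ i j, G i j = 0 ∨ G i j = 1)
    (hreg : ∀ i, ∑ j, G i j = d)
    (lam : ℝ) (hlam : 0 ≤ lam)
    (hspec : ∀ v : Fin n → ℝ, ∑ i, v i = 0 →
      Real.sqrt (∑ i, (G.mulVec v i) ^ 2) ≤ lam * Real.sqrt (∑ i, (v i) ^ 2)) :
    (1 / (n : ℝ) ^ 2) * linftyToL1Norm (Matrix.of fun i j => ((n : ℝ) / d) * G i j - 1)
      ≤ 4 * lam / d := by
  have hn' : (0:ℝ) < (n:ℝ) := by exact_mod_cast hn
  have hbound : linftyToL1Norm (Matrix.of fun i j => ((n : ℝ) / d) * G i j - 1)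
      ≤ lam * (n:ℝ)^2 / d := by
    apply Real.sSup_le
    · rintro x ⟨s, t, hs, ht, rfl⟩
      set c : ℝ := (∑ j, t j) / n with hc
      set v : Fin n → ℝ := fun j => t j - c with hv
      have hvsum : ∑ j, v j = 0 := by
        simp only [hv, Finset.sum_sub_distrib, Finset.sum_const, Finset.card_univ,
          Fintype.card_fin, nsmul_eq_mul, hc]
        field_simp
        ring
      have key : (∑ i, ∑ j, (Matrix.of fun i j => ((n : ℝ) / d) * G i j - 1) i j * s i * t j)
          = ((n:ℝ)/d) * ∑ i, s i * (G.mulVec v) i := by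
        rw [Finset.mul_sum]
        apply Finset.sum_congr rfl
        intro i _
        have h1 : (∑ j, (Matrix.of fun i j => ((n : ℝ) / d) * G i j - 1) i j * s i * t j)
            = s i * (((n:ℝ)/d) * (∑ j, G i j * t j) - ∑ j, t j) := by
          rw [Finset.mul_sum, mul_sub, Finset.mul_sum, Finset.mul_sum]
          rw [← Finset.sum_sub_distrib]
          apply Finset.sum_congr rfl
          intro j _
          simp only [Matrix.of_apply]
          ring
        rw [h1]
        have h2 : (G.mulVec v) i = (∑ j, G i j * t j) - c * d := by
          simp only [Matrix.mulVec, dotProduct, hv]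
          rw [← hreg i]
          rw [Finset.mul_sum, ← Finset.sum_sub_distrib]
          apply Finset.sum_congr rfl
          intro j _
          ring
        rw [h2]
        have h4 : ((n:ℝ)/d) * (c*d) = ∑ j, t j := by
          rw [hc]; field_simp
        linear_combination s i * h4
      rw [key]
      -- Cauchy-Schwarz
      set w : Fin n → ℝ := G.mulVec v with hw
      have hs2 : (∑ i, (s i)^2) = (n:ℝ) := by
        rw [Finset.sum_congr rfl (fun i _ => by rcases hs i with h | h <;> rw [h] <;> norm_num)]
        simp
      have ht2 : (∑ j, (v j)^2) ≤ (n:ℝ) := by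
        have : ∑ j, (v j)^2 = (∑ j, (t j)^2) - (n:ℝ) * c^2 := by
          simp only [hv, sub_sq, Finset.sum_add_distrib, Finset.sum_sub_distrib,
            Finset.sum_const, Finset.card_univ, Fintype.card_fin, nsmul_eq_mul]
          have h3 : c * (n:ℝ) = ∑ j, t j := by rw [hc]; field_simp
          have : ∑ j, 2 * t j * c = 2 * c * ∑ j, t j := by
            rw [Finset.mul_sum]; apply Finset.sum_congr rfl; intro j _ ; ring
          rw [this, ← h3]; ring
        rw [this]
        have ht2' : (∑ j, (t j)^2) = (n:ℝ) := by
          rw [Finset.sum_congr rfl (fun j _ => by rcases ht j with h | h <;> rw [h] <;> norm_num)]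
          simp
        nlinarith [sq_nonneg c]
      have hcs : (∑ i, s i * w i) ≤ Real.sqrt (∑ i, (s i)^2) * Real.sqrt (∑ i, (w i)^2) := by
        calc (∑ i, s i * w i) ≤ |∑ i, s i * w i| := le_abs_self _
          _ = Real.sqrt ((∑ i, s i * w i)^2) := (Real.sqrt_sq_eq_abs _).symm
          _ ≤ Real.sqrt ((∑ i, (s i)^2) * (∑ i, (w i)^2)) := by
              apply Real.sqrt_le_sqrt
              have := Finset.sum_mul_sq_le_sq_mul_sq Finset.univ s w
              calc (∑ i, s i * w i)^2 = (∑ i, s i * w i)^2 := rfl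
                _ ≤ (∑ i, (s i)^2) * (∑ i, (w i)^2) := by
                    have h2 := Finset.sum_mul_sq_le_sq_mul_sq Finset.univ s w
                    simpa [pow_two] using h2
          _ = Real.sqrt (∑ i, (s i)^2) * Real.sqrt (∑ i, (w i)^2) := by
              rw [Real.sqrt_mul (Finset.sum_nonneg fun i _ => sq_nonneg _)]
      have hspecw : Real.sqrt (∑ i, (w i)^2) ≤ lam * Real.sqrt (n:ℝ) := by
        calc Real.sqrt (∑ i, (w i)^2) ≤ lam * Real.sqrt (∑ j, (v j)^2) := hspec v hvsum
          _ ≤ lam * Real.sqrt (n:ℝ) := by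
              apply mul_le_mul_of_nonneg_left (Real.sqrt_le_sqrt ht2) hlam
      have hsum : (∑ i, s i * w i) ≤ lam * (n:ℝ) := by
        calc (∑ i, s i * w i) ≤ Real.sqrt (∑ i, (s i)^2) * Real.sqrt (∑ i, (w i)^2) := hcs
          _ = Real.sqrt (n:ℝ) * Real.sqrt (∑ i, (w i)^2) := by rw [hs2]
          _ ≤ Real.sqrt (n:ℝ) * (lam * Real.sqrt (n:ℝ)) := by
              apply mul_le_mul_of_nonneg_left hspecw (Real.sqrt_nonneg _)
          _ = lam * (Real.sqrt (n:ℝ) * Real.sqrt (n:ℝ)) := by ring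
          _ = lam * (n:ℝ) := by rw [Real.mul_self_sqrt hn'.le]
      calc ((n:ℝ)/d) * ∑ i, s i * w i ≤ ((n:ℝ)/d) * (lam * (n:ℝ)) := by
            apply mul_le_mul_of_nonneg_left hsum (by positivity)
        _ = lam * (n:ℝ)^2 / d := by ring
    · positivity
  calc (1 / (n : ℝ) ^ 2) * linftyToL1Norm (Matrix.of fun i j => ((n : ℝ) / d) * G i j - 1)
      ≤ (1 / (n : ℝ) ^ 2) * (lam * (n:ℝ)^2 / d) := by
        apply mul_le_mul_of_nonneg_left hbound (by positivity)
    _ = lam / d := by field_simp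
    _ ≤ 4 * lam / d := by
        gcongr
        linarith
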